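/- If the Partition problem instance E = {e_1,...,e_m} of positive integers has a solution (a subset summing to half the total), then the mixed-manna instance with two identical agents, goods of values e_1,...,e_m and two chores each of value −(Σ_i e_i)/2 + 1/4, has maximin share MMS ≥ 1/4. -/

import Mathlib

open Finset
open scoped Classical

/-- `A` is a partition of the item set `M` into `n` (possibly empty) bundles. -/
def IsPartition {ι : Type*} [DecidableEq ι] (M : Finset ι) (n : ℕ)
    (A : Fin n → Finset ι) : Prop :=
  (∀ k, A k ⊆ M) ∧ (∀ k l, k ≠ l → Disjoint (A k) (A l)) ∧ (∀ j ∈ M, ∃ k, j ∈ A k)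

/-- `μ` is the maximin share of the additive valuation `v` over `M` with `n` bundles:
some partition attains minimum bundle value at least `μ`, and every partition has a
bundle of value at most `μ`. -/
def IsMMS {ι : Type*} [DecidableEq ι] (v : ι → ℝ) (M : Finset ι) (n : ℕ) (μ : ℝ) : Prop :=
  (∃ A : Fin n → Finset ι, IsPartition M n A ∧ ∀ k, μ ≤ ∑ j ∈ A k, v j) ∧
  (∀ A : Fin n → Finset ι, IsPartition M n A → ∃ k, ∑ j ∈ A k, v j ≤ μ)


/-- If the Partition instance `e_1,...,e_m` (positive integers) has a solution, then the
two-agent mixed manna instance with goods of values `e_j` and two chores of value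
`-(Σ e)/2 + 1/4` admits a partition into two bundles each of value at least `1/4`;
in particular its maximin share is at least `1/4`. -/
theorem partition_implies_mms_ge_quarter (m : ℕ) (e : Fin m → ℕ)
    (hpos : ∀ i, 0 < e i) (S : Finset (Fin m))
    (hS : 2 * ∑ i ∈ S, e i = ∑ i, e i) :
    ∃ A : Fin 2 → Finset (Fin (m + 2)),
      IsPartition Finset.univ 2 A ∧
      ∀ k, (1 / 4 : ℝ) ≤ ∑ j ∈ A k,
        (if h : (j : ℕ) < m then (e ⟨j, h⟩ : ℝ)
         else -((∑ i, e i : ℕ) : ℝ) / 2 + 1 / 4) := by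
  classical
  set f : Fin (m+2) → ℝ := fun j =>
    (if h : (j : ℕ) < m then (e ⟨j, h⟩ : ℝ)
     else -((∑ i, e i : ℕ) : ℝ) / 2 + 1 / 4) with hf
  let g : Fin m ↪ Fin (m+2) := Fin.castAddEmb 2
  have hg : ∀ i : Fin m, ((g i : ℕ)) = (i : ℕ) := fun i => rfl
  let c0 : Fin (m+2) := ⟨m, by omega⟩
  let c1 : Fin (m+2) := ⟨m+1, by omega⟩
  have hc0 : ∀ (T : Finset (Fin m)), c0 ∉ T.map g := by
    intro T h
    rcases Finset.mem_map.1 h with ⟨i, _, hi⟩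
    have := congrArg (Fin.val) hi
    simp [hg, c0] at this
    omega
  have hc1 : ∀ (T : Finset (Fin m)), c1 ∉ T.map g := by
    intro T h
    rcases Finset.mem_map.1 h with ⟨i, _, hi⟩
    have := congrArg (Fin.val) hi
    simp [hg, c1] at this
    omega
  let A : Fin 2 → Finset (Fin (m+2)) :=
    fun k => if k = 0 then insert c0 (S.map g) else insert c1 (Sᶜ.map g)
  have hfg : ∀ i : Fin m, f (g i) = (e i : ℝ) := by
    intro i
    have hi : ((g i : ℕ)) < m := by rw [hg]; exact i.isLt
    simp only [hf, dif_pos hi]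
    congr 1
  have hsum0 : ∑ j ∈ S.map g, f j = ∑ i ∈ S, (e i : ℝ) := by
    rw [Finset.sum_map]; exact Finset.sum_congr rfl fun i _ => hfg i
  have hsum1 : ∑ j ∈ Sᶜ.map g, f j = ∑ i ∈ Sᶜ, (e i : ℝ) := by
    rw [Finset.sum_map]; exact Finset.sum_congr rfl fun i _ => hfg i
  have hfc0 : f c0 = -((∑ i, e i : ℕ) : ℝ) / 2 + 1 / 4 := by
    simp only [hf, c0]
    rw [dif_neg (by omega)]
  have hfc1 : f c1 = -((∑ i, e i : ℕ) : ℝ) / 2 + 1 / 4 := by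
    simp only [hf, c1]
    rw [dif_neg (by omega)]
  have hST : ∑ i ∈ S, (e i : ℝ) = ((∑ i, e i : ℕ) : ℝ) / 2 := by
    have : (2 : ℝ) * ∑ i ∈ S, (e i : ℝ) = ((∑ i, e i : ℕ) : ℝ) := by
      rw [← Nat.cast_sum, ← Nat.cast_ofNat, ← Nat.cast_mul, hS]
    linarith
  have hSTc : ∑ i ∈ Sᶜ, (e i : ℝ) = ((∑ i, e i : ℕ) : ℝ) / 2 := by
    have h := Finset.sum_add_sum_compl S (fun i => (e i : ℝ))
    push_cast at h
    have h2 : ((∑ i, e i : ℕ) : ℝ) = ∑ i : Fin m, (e i : ℝ) := Nat.cast_sum _ _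
    linarith
  refine ⟨A, ⟨fun k => Finset.subset_univ _, ?_, ?_⟩, ?_⟩
  · intro k l hkl
    have : (k = 0 ∧ l = 1) ∨ (k = 1 ∧ l = 0) := by omega
    have disj : Disjoint (A 0) (A 1) := by
      rw [Finset.disjoint_left]
      intro a ha0 ha1
      simp only [A, if_pos rfl, if_neg (by omega : (1 : Fin 2) ≠ 0),
        Finset.mem_insert] at ha0 ha1
      rcases ha0 with h0 | h0
      · rcases ha1 with h1 | h1
        · rw [h0] at h1; have := congrArg Fin.val h1; simp [c0, c1] at this
        · rw [h0] at h1; exact hc0 _ h1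
      · rcases ha1 with h1 | h1
        · rw [h1] at h0; exact hc1 _ h0
        · rcases Finset.mem_map.1 h0 with ⟨i, hiS, hi⟩
          rcases Finset.mem_map.1 h1 with ⟨i', hiS', hi'⟩
          have : i = i' := g.injective (hi.trans hi'.symm)
          rw [this] at hiS
          exact (Finset.mem_compl.1 hiS') hiS
    rcases this with ⟨hk, hl⟩ | ⟨hk, hl⟩
    · rw [hk, hl]; exact disj
    · rw [hk, hl]; exact disj.symm
  · intro j _
    by_cases hj : (j : ℕ) < m
    · by_cases hjS : (⟨j, hj⟩ : Fin m) ∈ S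
      · refine ⟨0, ?_⟩
        simp only [A, if_pos rfl, Finset.mem_insert]
        right
        exact Finset.mem_map.2 ⟨⟨j, hj⟩, hjS, Fin.ext rfl⟩
      · refine ⟨1, ?_⟩
        simp only [A, if_neg (by omega : (1 : Fin 2) ≠ 0), Finset.mem_insert]
        right
        exact Finset.mem_map.2 ⟨⟨j, hj⟩, Finset.mem_compl.2 hjS, Fin.ext rfl⟩
    · have : (j : ℕ) = m ∨ (j : ℕ) = m + 1 := by omega
      rcases this with h | h
      · refine ⟨0, ?_⟩
        simp only [A, if_pos rfl, Finset.mem_insert]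
        exact Or.inl (Fin.ext h)
      · refine ⟨1, ?_⟩
        simp only [A, if_neg (by omega : (1 : Fin 2) ≠ 0), Finset.mem_insert]
        exact Or.inl (Fin.ext h)
  · intro k
    show (1/4 : ℝ) ≤ ∑ j ∈ A k, f j
    by_cases hk : k = 0
    · rw [hk]
      have : A 0 = insert c0 (S.map g) := by simp [A]
      rw [this, Finset.sum_insert (hc0 S), hsum0, hfc0, hST]
      linarith
    · have hk1 : k = 1 := by omega
      rw [hk1]
      have : A 1 = insert c1 (Sᶜ.map g) := by simp [A]
      rw [this, Finset.sum_insert (hc1 Sᶜ), hsum1, hfc1, hSTc]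
      linarith
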